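/- Let (P^v)_{v∈ℕ*} be an i.i.d. family of random probability vectors with a := ∑_{i=1}^∞ E[(P^∅_i)²], and assume a < 1. Define the random variable Q := ∑_{m=1}^∞ ∑_{(i_1,…,i_m)∈ℕ^m} ∏_{j=1}^m (P^{(i_1,…,i_{j−1})}_{i_j})². Then Q < ∞ almost surely and E[Q] = a/(1 − a) = 1/(1 − a) − 1. -/

import Mathlib

open MeasureTheory ProbabilityTheory Finset
open scoped ENNReal NNReal

lemma aux_lintegral_indep_prod {Ω ι : Type*} [MeasurableSpace Ω] [DecidableEq ι]
    (μ : Measure Ω) [IsProbabilityMeasure μ]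
    (P : ι → Ω → ℕ → ℝ) (hPmeas : ∀ v, Measurable (P v))
    (hiid : iIndepFun P μ) :
    ∀ (n : ℕ) (u : Fin n → ι), Function.Injective u →
    ∀ (F : Fin n → (ℕ → ℝ) → ℝ≥0∞), (∀ j, Measurable (F j)) →
    ∫⁻ ω, ∏ j, F j (P (u j) ω) ∂μ = ∏ j, ∫⁻ ω, F j (P (u j) ω) ∂μ := by
  intro n
  induction n with
  | zero => intro u hu F hF; simp
  | succ n ih =>
    intro u hu F hF
    classical
    set S : Finset ι := Finset.image (fun j : Fin n => u j.castSucc) Finset.univ with hS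
    set T : Finset ι := {u (Fin.last n)} with hT
    have hST : Disjoint S T := by
      simp only [hS, hT, Finset.disjoint_singleton_right, Finset.mem_image, Finset.mem_univ,
        true_and]
      rintro ⟨j, hj⟩
      exact absurd (hu hj) (Fin.ne_of_lt j.castSucc_lt_last)
    have hmem : ∀ j : Fin n, u j.castSucc ∈ S := by
      intro j; exact Finset.mem_image_of_mem _ (Finset.mem_univ j)
    have hmemT : u (Fin.last n) ∈ T := Finset.mem_singleton_self _
    set φ : ((i : S) → ℕ → ℝ) → ℝ≥0∞ :=
      fun g => ∏ j : Fin n, F j.castSucc (g ⟨u j.castSucc, hmem j⟩) with hφ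
    set ψ : ((i : T) → ℕ → ℝ) → ℝ≥0∞ :=
      fun g => F (Fin.last n) (g ⟨u (Fin.last n), hmemT⟩) with hψ
    have hφm : Measurable φ := by
      apply Finset.measurable_prod
      intro j _
      exact (hF _).comp (measurable_pi_apply _)
    have hψm : Measurable ψ := (hF _).comp (measurable_pi_apply _)
    have hInd : IndepFun (fun ω => ∏ j : Fin n, F j.castSucc (P (u j.castSucc) ω))
        (fun ω => F (Fin.last n) (P (u (Fin.last n)) ω)) μ :=
      (hiid.indepFun_finset S T hST hPmeas).comp hφm hψm
    have hXm : Measurable fun ω => ∏ j : Fin n, F j.castSucc (P (u j.castSucc) ω) :=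
      Finset.measurable_prod _ fun j _ => (hF _).comp (hPmeas _)
    have hYm : Measurable fun ω => F (Fin.last n) (P (u (Fin.last n)) ω) :=
      (hF _).comp (hPmeas _)
    calc ∫⁻ ω, ∏ j, F j (P (u j) ω) ∂μ
        = ∫⁻ ω, (∏ j : Fin n, F j.castSucc (P (u j.castSucc) ω))
            * F (Fin.last n) (P (u (Fin.last n)) ω) ∂μ := by
          congr 1; funext ω; rw [Fin.prod_univ_castSucc]
      _ = (∫⁻ ω, ∏ j : Fin n, F j.castSucc (P (u j.castSucc) ω) ∂μ)
            * ∫⁻ ω, F (Fin.last n) (P (u (Fin.last n)) ω) ∂μ :=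
          lintegral_mul_eq_lintegral_mul_lintegral_of_indepFun''
            hXm.aemeasurable hYm.aemeasurable hInd
      _ = (∏ j : Fin n, ∫⁻ ω, F j.castSucc (P (u j.castSucc) ω) ∂μ)
            * ∫⁻ ω, F (Fin.last n) (P (u (Fin.last n)) ω) ∂μ := by
          rw [ih (fun j => u j.castSucc)
            (fun j k hjk => Fin.castSucc_injective n (hu hjk))
            (fun j => F j.castSucc) (fun j => hF _)]
      _ = ∏ j, ∫⁻ ω, F j (P (u j) ω) ∂μ :=
          (Fin.prod_univ_castSucc fun j => ∫⁻ ω, F j (P (u j) ω) ∂μ).symm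

lemma aux_tsum_pi_fin (c : ℕ → ℝ≥0∞) : ∀ n : ℕ,
    ∑' (f : Fin n → ℕ), ∏ j, c (f j) = (∑' k, c k) ^ n := by
  intro n
  induction n with
  | zero =>
    simp only [Finset.univ_eq_empty, Finset.prod_empty, pow_zero]
    exact tsum_eq_single (f := fun _ : Fin 0 → ℕ => (1 : ℝ≥0∞))
      (fun i : Fin 0 => (i.elim0 : ℕ)) (fun b hb => (hb (Subsingleton.elim b _)).elim)
  | succ n ih =>
    rw [← (Fin.consEquiv (fun _ : Fin (n + 1) => ℕ)).tsum_eq]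
    have : ∀ p : ℕ × (Fin n → ℕ),
        (∏ j, c ((Fin.consEquiv (fun _ : Fin (n + 1) => ℕ)) p j)) = c p.1 * ∏ j, c (p.2 j) := by
      rintro ⟨x, g⟩
      rw [Fin.prod_univ_succ]
      simp [Fin.consEquiv]
    simp_rw [this]
    rw [ENNReal.tsum_prod (f := fun (a : ℕ) (b : Fin n → ℕ) => c a * ∏ j, c (b j))]
    simp_rw [ENNReal.tsum_mul_left]
    rw [ENNReal.tsum_mul_right, ih, pow_succ, mul_comm]

/-- Let `(P^v)_{v ∈ ℕ*}` be an i.i.d. family of random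
probability vectors with `a := ∑_i E[(P^∅_i)²] < 1`, and define
`Q := ∑_{m≥1} ∑_{(i_1,…,i_m)} ∏_{j=1}^m (P^{(i_1,…,i_{j-1})}_{i_j})²`
(a well-defined random variable with values in `[0, ∞]`; below the outer sum over
`m : ℕ` enumerates tuple lengths `m + 1 ≥ 1`).  Then `Q < ∞` almost surely and
`E[Q] = a/(1 - a) = 1/(1 - a) - 1`. -/
theorem stmt13_Q_finite_and_mean {Ω : Type*} [MeasurableSpace Ω]
    (μ : Measure Ω) [IsProbabilityMeasure μ]
    (P : List ℕ → Ω → ℕ → ℝ)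
    (hPmeas : ∀ v, Measurable (P v))
    (hiid : iIndepFun P μ)
    (hident : ∀ v, Measure.map (P v) μ = Measure.map (P []) μ)
    (hprob : ∀ v, ∀ᵐ ω ∂μ, (∀ i, 0 ≤ P v ω i) ∧ (∑' i : ℕ, P v ω i) = 1)
    (a : ℝ) (ha : a = ∑' i : ℕ, ∫ ω, (P [] ω i) ^ 2 ∂μ) (ha1 : a < 1)
    (Q : Ω → ℝ≥0∞)
    (hQ : Q = fun ω => ∑' (m : ℕ), ∑' (i : Fin (m + 1) → ℕ),
      ∏ j : Fin (m + 1),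
        (ENNReal.ofReal
          (P (List.ofFn fun t : Fin j.1 => i (Fin.castLE j.2.le t)) ω (i j))) ^ 2) :
    (∀ᵐ ω ∂μ, Q ω < ⊤) ∧ ∫⁻ ω, Q ω ∂μ = ENNReal.ofReal (a / (1 - a)) := by
  classical
  have hmc : ∀ (v : List ℕ) (k : ℕ),
      Measurable fun ω => (ENNReal.ofReal (P v ω k)) ^ 2 :=
    fun v k => (((measurable_pi_apply k).comp (hPmeas v)).ennreal_ofReal).pow_const 2
  set c : ℕ → ℝ≥0∞ := fun k => ∫⁻ ω, (ENNReal.ofReal (P [] ω k)) ^ 2 ∂μ with hc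
  -- a.e. facts
  have hae : ∀ᵐ ω ∂μ, (∑' k, (ENNReal.ofReal (P [] ω k)) ^ 2 ≤ 1) ∧
      ∀ k, ENNReal.ofReal ((P [] ω k) ^ 2) = (ENNReal.ofReal (P [] ω k)) ^ 2 := by
    filter_upwards [hprob []] with ω hω
    obtain ⟨hnn, hsum⟩ := hω
    have hsummable : Summable fun k => P [] ω k := by
      by_contra h
      rw [tsum_eq_zero_of_not_summable h] at hsum
      norm_num at hsum
    have hof : ∑' k, ENNReal.ofReal (P [] ω k) = 1 := by
      rw [← ENNReal.ofReal_tsum_of_nonneg hnn hsummable, hsum, ENNReal.ofReal_one]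
    refine ⟨?_, fun k => (ENNReal.ofReal_pow (hnn k) 2)⟩
    calc ∑' k, (ENNReal.ofReal (P [] ω k)) ^ 2
        ≤ ∑' k, ENNReal.ofReal (P [] ω k) := by
          apply ENNReal.tsum_le_tsum
          intro k
          have h1 : ENNReal.ofReal (P [] ω k) ≤ 1 := hof ▸ ENNReal.le_tsum k
          calc (ENNReal.ofReal (P [] ω k)) ^ 2
              = ENNReal.ofReal (P [] ω k) * ENNReal.ofReal (P [] ω k) := sq _
            _ ≤ 1 * ENNReal.ofReal (P [] ω k) := mul_le_mul_left h1 _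
            _ = ENNReal.ofReal (P [] ω k) := one_mul _
      _ = 1 := hof
  have hcsum : ∑' k, c k ≤ 1 := by
    rw [hc, ← lintegral_tsum fun k => (hmc [] k).aemeasurable]
    calc ∫⁻ ω, ∑' k, (ENNReal.ofReal (P [] ω k)) ^ 2 ∂μ
        ≤ ∫⁻ _, 1 ∂μ := lintegral_mono_ae (hae.mono fun ω h => h.1)
      _ = 1 := by simp
  set A : ℝ≥0∞ := ∑' k, c k with hA
  have hAne : A ≠ ⊤ := (lt_of_le_of_lt hcsum ENNReal.one_lt_top).ne
  have hckne : ∀ k, c k ≠ ⊤ :=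
    fun k => (lt_of_le_of_lt (le_trans (ENNReal.le_tsum k) hcsum) ENNReal.one_lt_top).ne
  have hint : ∀ k, ∫ ω, (P [] ω k) ^ 2 ∂μ = (c k).toReal := by
    intro k
    have hm0 : Measurable fun ω => P [] ω k := (measurable_pi_apply k).comp (hPmeas [])
    rw [integral_eq_lintegral_of_nonneg_ae (ae_of_all _ fun ω => sq_nonneg (P [] ω k))
      (hm0.pow_const 2).aestronglyMeasurable]
    congr 1
    apply lintegral_congr_ae
    filter_upwards [hae] with ω h using h.2 k
  have haA : a = A.toReal := by
    rw [ha]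
    simp_rw [hint]
    exact (ENNReal.tsum_toReal_eq hckne).symm
  have hofa : ENNReal.ofReal a = A := by rw [haA, ENNReal.ofReal_toReal hAne]
  have ha0 : 0 ≤ a := haA ▸ ENNReal.toReal_nonneg
  -- transfer each factor to the root distribution
  have hfac : ∀ (v : List ℕ) (k : ℕ),
      ∫⁻ ω, (ENNReal.ofReal (P v ω k)) ^ 2 ∂μ = c k := by
    intro v k
    have hm : Measurable fun f : ℕ → ℝ => (ENNReal.ofReal (f k)) ^ 2 :=
      ((measurable_pi_apply k).ennreal_ofReal).pow_const 2
    calc ∫⁻ ω, (ENNReal.ofReal (P v ω k)) ^ 2 ∂μ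
        = ∫⁻ f, (ENNReal.ofReal (f k)) ^ 2 ∂(Measure.map (P v) μ) :=
          (lintegral_map hm (hPmeas v)).symm
      _ = ∫⁻ f, (ENNReal.ofReal (f k)) ^ 2 ∂(Measure.map (P []) μ) := by rw [hident v]
      _ = c k := lintegral_map hm (hPmeas [])
  -- key computation for fixed tuple
  have key : ∀ (m : ℕ) (i : Fin (m + 1) → ℕ),
      ∫⁻ ω, ∏ j : Fin (m + 1),
        (ENNReal.ofReal
          (P (List.ofFn fun t : Fin j.1 => i (Fin.castLE j.2.le t)) ω (i j))) ^ 2 ∂μ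
        = ∏ j : Fin (m + 1), c (i j) := by
    intro m i
    have hinj : Function.Injective
        fun j : Fin (m + 1) => List.ofFn fun t : Fin j.1 => i (Fin.castLE j.2.le t) := by
      intro j j' h
      have := congrArg List.length h
      simp only [List.length_ofFn] at this
      exact Fin.ext this
    have := aux_lintegral_indep_prod μ P hPmeas hiid (m + 1)
      (fun j : Fin (m + 1) => List.ofFn fun t : Fin j.1 => i (Fin.castLE j.2.le t)) hinj
      (fun j => fun f => (ENNReal.ofReal (f (i j))) ^ 2)
      (fun j => ((measurable_pi_apply (i j)).ennreal_ofReal).pow_const 2)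
    rw [this]
    exact Finset.prod_congr rfl fun j _ => hfac _ _
  -- the lintegral of Q
  have hQint : ∫⁻ ω, Q ω ∂μ = A * (1 - A)⁻¹ := by
    rw [hQ]
    rw [lintegral_tsum fun m => (Measurable.ennreal_tsum fun i =>
      Finset.measurable_prod _ fun j _ => hmc _ _).aemeasurable]
    have h1 : ∀ m : ℕ, (∫⁻ ω, ∑' i : Fin (m + 1) → ℕ,
        ∏ j : Fin (m + 1),
          (ENNReal.ofReal
            (P (List.ofFn fun t : Fin j.1 => i (Fin.castLE j.2.le t)) ω (i j))) ^ 2 ∂μ)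
        = A ^ (m + 1) := by
      intro m
      rw [lintegral_tsum fun i =>
        (Finset.measurable_prod _ fun j _ => hmc _ _).aemeasurable]
      calc ∑' i : Fin (m + 1) → ℕ, ∫⁻ ω, ∏ j : Fin (m + 1),
            (ENNReal.ofReal
              (P (List.ofFn fun t : Fin j.1 => i (Fin.castLE j.2.le t)) ω (i j))) ^ 2 ∂μ
          = ∑' i : Fin (m + 1) → ℕ, ∏ j : Fin (m + 1), c (i j) :=
            tsum_congr fun i => key m i
        _ = A ^ (m + 1) := aux_tsum_pi_fin c (m + 1)
    rw [tsum_congr h1]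
    exact ENNReal.tsum_geometric_add_one A
  have hsub : (1 : ℝ≥0∞) - A = ENNReal.ofReal (1 - a) := by
    rw [← hofa, ← ENNReal.ofReal_one, ← ENNReal.ofReal_sub _ ha0]
  have hQint' : ∫⁻ ω, Q ω ∂μ = ENNReal.ofReal (a / (1 - a)) := by
    rw [hQint, hsub, ← hofa,
      ENNReal.ofReal_div_of_pos (by linarith : (0:ℝ) < 1 - a), div_eq_mul_inv]
  refine ⟨?_, hQint'⟩
  have hQmeas : Measurable Q := by
    rw [hQ]
    exact Measurable.ennreal_tsum fun m => Measurable.ennreal_tsum fun i =>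
      Finset.measurable_prod _ fun j _ => hmc _ _
  exact ae_lt_top hQmeas (by rw [hQint']; exact ENNReal.ofReal_ne_top)
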